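/- Let D₁ and D₂ be closed disks in ℝ² with centers c₁, c₂ and radii r₁ ≥ r₂ > 0, whose boundary circles intersect at a point u with angle α = ∠c₁ u c₂ satisfying α ≥ 2π/3. Then ‖c₁ − c₂‖ ≥ (√3 − 1)·r₁ + r₂. -/
import Mathlib


/-- **Center distance lower bound from a large lens angle.**
Let `D₁`, `D₂` be closed disks with centers `c₁`, `c₂` and radii `r₁ ≥ r₂ > 0`, whose
boundary circles meet at a point `u` with lens angle `α = ∠ c₁ u c₂ ≥ 2π/3`.  Then
`‖c₁ − c₂‖ ≥ (√3 − 1)·r₁ + r₂`. -/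
theorem center_dist_ge_of_lens_angle_ge
    (c₁ c₂ : EuclideanSpace ℝ (Fin 2)) (r₁ r₂ : ℝ)
    (hr₂ : 0 < r₂) (hr : r₂ ≤ r₁)
    (u : EuclideanSpace ℝ (Fin 2))
    (hu₁ : dist u c₁ = r₁) (hu₂ : dist u c₂ = r₂)
    (hangle : 2 * Real.pi / 3 ≤ EuclideanGeometry.angle c₁ u c₂) :
    (Real.sqrt 3 - 1) * r₁ + r₂ ≤ ‖c₁ - c₂‖ := by
  have hlaw := EuclideanGeometry.law_cos c₁ u c₂
  rw [dist_comm c₁ u, dist_comm c₂ u, hu₁, hu₂] at hlaw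
  have hcos : Real.cos (EuclideanGeometry.angle c₁ u c₂) ≤ -1/2 := by
    have h1 : Real.cos (EuclideanGeometry.angle c₁ u c₂) ≤ Real.cos (2 * Real.pi / 3) := by
      apply Real.cos_le_cos_of_nonneg_of_le_pi _ (EuclideanGeometry.angle_le_pi _ _ _) hangle
      positivity
    have h2 : Real.cos (2 * Real.pi / 3) = -1/2 := by
      have : (2 : ℝ) * Real.pi / 3 = Real.pi - Real.pi / 3 := by ring
      rw [this, Real.cos_pi_sub, Real.cos_pi_div_three]; norm_num
    linarith
  have hd : dist c₁ c₂ ^ 2 ≥ r₁ ^ 2 + r₂ ^ 2 + r₁ * r₂ := by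
    nlinarith [mul_pos (lt_of_lt_of_le hr₂ hr) hr₂]
  have hs3 : Real.sqrt 3 ^ 2 = 3 := Real.sq_sqrt (by norm_num)
  have hs3' : (1:ℝ) ≤ Real.sqrt 3 := by nlinarith [Real.sqrt_nonneg 3]
  have hnn : (0:ℝ) ≤ (Real.sqrt 3 - 1) * r₁ + r₂ := by nlinarith
  have hkey : ((Real.sqrt 3 - 1) * r₁ + r₂) ^ 2 ≤ dist c₁ c₂ ^ 2 := by
    nlinarith [mul_nonneg (by nlinarith : (0:ℝ) ≤ 2 * Real.sqrt 3 - 3)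
      (mul_nonneg (le_trans hr₂.le hr) (sub_nonneg.2 hr) : (0:ℝ) ≤ r₁ * (r₁ - r₂))]
  have := le_of_pow_le_pow_left₀ (two_ne_zero) dist_nonneg hkey
  rwa [dist_eq_norm] at this
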